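/- Holevo gap bound. Let N be a quantum channel with complementary channel N^c, and suppose the ensemble {p_i, ρ_i} achieves the one-shot private capacity of N, i.e. I_p({p_i,ρ_i},N) = P^(1)(N). Then C^(1)(N) ≥ P^(1)(N) + χ({p_i,ρ_i}, N^c), and χ({p_i,ρ_i}, N^c) ≥ 0. -/

import Mathlib

open Matrix BigOperators Kronecker
open scoped ComplexOrder

/-- von Neumann entropy of a matrix: `-∑ μ_k log μ_k` over the eigenvalues
(junk value `0` if the matrix is not Hermitian). Note `Real.log 0 = 0`. -/
noncomputable def vNEntropy {n : Type*} [Fintype n] [DecidableEq n]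
    (σ : Matrix n n ℂ) : ℝ :=
  if h : σ.IsHermitian then -∑ k, (h.eigenvalues k) * Real.log (h.eigenvalues k) else 0

/-- `K` is a family of Kraus operators for a quantum channel. -/
def IsKraus {dA dB ι : Type*} [Fintype dA] [DecidableEq dA] [Fintype dB] [Fintype ι]
    (K : ι → Matrix dB dA ℂ) : Prop :=
  ∑ i, (K i)ᴴ * K i = 1

/-- Action `X ↦ ∑ i, K i * X * (K i)ᴴ` of the channel with Kraus operators `K`. -/
noncomputable def chanOut {dA dB ι : Type*} [Fintype dA] [Fintype dB] [Fintype ι]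
    (K : ι → Matrix dB dA ℂ) (X : Matrix dA dA ℂ) : Matrix dB dB ℂ :=
  ∑ i, K i * X * (K i)ᴴ

/-- Action of the complementary channel: `(N^c(X))_{ij} = Tr (K i * X * (K j)ᴴ)`. -/
noncomputable def compOut {dA dB ι : Type*} [Fintype dA] [Fintype dB] [Fintype ι]
    (K : ι → Matrix dB dA ℂ) (X : Matrix dA dA ℂ) : Matrix ι ι ℂ :=
  Matrix.of fun i j => Matrix.trace (K i * X * (K j)ᴴ)

/-- A quantum state: positive semidefinite with trace one. -/
def IsQState {n : Type*} [Fintype n] (ρ : Matrix n n ℂ) : Prop :=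
  ρ.PosSemidef ∧ ρ.trace = 1

/-- Coherent information `I_c(ρ, N) = S(N(ρ)) - S(N^c(ρ))`. -/
noncomputable def cohInfo {dA dB ι : Type*} [Fintype dA] [Fintype dB] [DecidableEq dB]
    [Fintype ι] [DecidableEq ι] (K : ι → Matrix dB dA ℂ) (ρ : Matrix dA dA ℂ) : ℝ :=
  vNEntropy (chanOut K ρ) - vNEntropy (compOut K ρ)

/-- One-shot quantum capacity: `Q¹(N) = sup_ρ I_c(ρ, N)` over all states `ρ`. -/
noncomputable def Q1 {dA dB ι : Type*} [Fintype dA] [Fintype dB] [DecidableEq dB]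
    [Fintype ι] [DecidableEq ι] (K : ι → Matrix dB dA ℂ) : ℝ :=
  sSup {x : ℝ | ∃ ρ : Matrix dA dA ℂ, IsQState ρ ∧ cohInfo K ρ = x}

/-- Kraus operators of the tensor product channel `N₁ ⊗ N₂`. -/
noncomputable def tensorKraus {dA₁ dB₁ ι₁ dA₂ dB₂ ι₂ : Type*}
    (K1 : ι₁ → Matrix dB₁ dA₁ ℂ) (K2 : ι₂ → Matrix dB₂ dA₂ ℂ) :
    ι₁ × ι₂ → Matrix (dB₁ × dB₂) (dA₁ × dA₂) ℂ :=
  fun p => K1 p.1 ⊗ₖ K2 p.2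

/-- `IsEnsemble p σs` : the `p i` form a probability vector and each `σs i` is a state. -/
def IsEnsemble {dA : Type*} [Fintype dA] {n : ℕ} (p : Fin n → ℝ)
    (σs : Fin n → Matrix dA dA ℂ) : Prop :=
  (∀ i, 0 ≤ p i) ∧ ∑ i, p i = 1 ∧ ∀ i, IsQState (σs i)

/-- Private information of an ensemble:
`I_p({p_i, ρ_i}, N) = I_c(∑ p_i ρ_i, N) - ∑ p_i I_c(ρ_i, N)`. -/
noncomputable def privInfo {dA dB ι : Type*} [Fintype dA] [Fintype dB] [DecidableEq dB]
    [Fintype ι] [DecidableEq ι] (K : ι → Matrix dB dA ℂ) {n : ℕ} (p : Fin n → ℝ)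
    (σs : Fin n → Matrix dA dA ℂ) : ℝ :=
  cohInfo K (∑ i, (p i : ℂ) • σs i) - ∑ i, p i * cohInfo K (σs i)

/-- One-shot private capacity: the supremum of the private information over all ensembles. -/
noncomputable def P1 {dA dB ι : Type*} [Fintype dA] [Fintype dB] [DecidableEq dB]
    [Fintype ι] [DecidableEq ι] (K : ι → Matrix dB dA ℂ) : ℝ :=
  sSup {x : ℝ | ∃ (n : ℕ) (p : Fin n → ℝ) (σs : Fin n → Matrix dA dA ℂ),
    IsEnsemble p σs ∧ privInfo K p σs = x}

/-- Holevo information of an ensemble with respect to the channel `N`: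
`χ({p_i, ρ_i}, N) = S(N(∑ p_i ρ_i)) - ∑ p_i S(N(ρ_i))`. -/
noncomputable def holevoChan {dA dB ι : Type*} [Fintype dA] [Fintype dB] [DecidableEq dB]
    [Fintype ι] [DecidableEq ι] (K : ι → Matrix dB dA ℂ) {n : ℕ} (p : Fin n → ℝ)
    (σs : Fin n → Matrix dA dA ℂ) : ℝ :=
  vNEntropy (chanOut K (∑ i, (p i : ℂ) • σs i)) - ∑ i, p i * vNEntropy (chanOut K (σs i))

/-- Holevo information of an ensemble with respect to the complementary channel `N^c`. -/
noncomputable def holevoComp {dA dB ι : Type*} [Fintype dA] [Fintype dB] [DecidableEq dB]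
    [Fintype ι] [DecidableEq ι] (K : ι → Matrix dB dA ℂ) {n : ℕ} (p : Fin n → ℝ)
    (σs : Fin n → Matrix dA dA ℂ) : ℝ :=
  vNEntropy (compOut K (∑ i, (p i : ℂ) • σs i)) - ∑ i, p i * vNEntropy (compOut K (σs i))

/-- Holevo capacity: the supremum of the Holevo information over all ensembles. -/
noncomputable def C1 {dA dB ι : Type*} [Fintype dA] [Fintype dB] [DecidableEq dB]
    [Fintype ι] [DecidableEq ι] (K : ι → Matrix dB dA ℂ) : ℝ :=
  sSup {x : ℝ | ∃ (n : ℕ) (p : Fin n → ℝ) (σs : Fin n → Matrix dA dA ℂ),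
    IsEnsemble p σs ∧ holevoChan K p σs = x}

lemma vNEntropy_eq {n : Type*} [Fintype n] [DecidableEq n] {σ : Matrix n n ℂ}
    (h : σ.IsHermitian) : vNEntropy σ = ∑ k, Real.negMulLog (h.eigenvalues k) := by
  rw [vNEntropy, dif_pos h, ← Finset.sum_neg_distrib]
  simp [Real.negMulLog, neg_mul]

lemma unitary_row_sum {m : Type*} [Fintype m] [DecidableEq m] (U : Matrix.unitaryGroup m ℂ)
    (k : m) : ∑ j, Complex.normSq ((U : Matrix m m ℂ) k j) = 1 := by
  have h := Matrix.mem_unitaryGroup_iff.mp U.2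
  have h2 := congrFun (congrFun (congrArg (fun M : Matrix m m ℂ => (M : Matrix m m ℂ)) h) k) k
  simp only [Matrix.mul_apply, Matrix.one_apply_eq, Matrix.star_apply,
    Matrix.conjTranspose_apply] at h2
  have : ((∑ j, Complex.normSq ((U : Matrix m m ℂ) k j) : ℝ) : ℂ) = 1 := by
    push_cast
    rw [← h2]
    congr 1
    ext j
    rw [← Complex.mul_conj]
    rfl
  exact_mod_cast this

lemma unitary_col_sum {m : Type*} [Fintype m] [DecidableEq m] (U : Matrix.unitaryGroup m ℂ)
    (j : m) : ∑ k, Complex.normSq ((U : Matrix m m ℂ) k j) = 1 := by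
  have h := Matrix.mem_unitaryGroup_iff'.mp U.2
  have h2 := congrFun (congrFun (congrArg (fun M : Matrix m m ℂ => (M : Matrix m m ℂ)) h) j) j
  simp only [Matrix.mul_apply, Matrix.one_apply_eq, Matrix.star_apply,
    Matrix.conjTranspose_apply] at h2
  have : ((∑ k, Complex.normSq ((U : Matrix m m ℂ) k j) : ℝ) : ℂ) = 1 := by
    push_cast
    rw [← h2]
    exact Finset.sum_congr rfl fun k _ => Complex.normSq_eq_conj_mul_self
  exact_mod_cast this

lemma negMulLog_jensen {n : Type*} [Fintype n] (w x : n → ℝ) (hw : ∀ i, 0 ≤ w i)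
    (hw1 : ∑ i, w i = 1) (hx : ∀ i, 0 ≤ x i) :
    ∑ i, w i * Real.negMulLog (x i) ≤ Real.negMulLog (∑ i, w i * x i) := by
  have := Real.concaveOn_negMulLog.le_map_sum (t := Finset.univ) (w := w) (p := x)
    (fun i _ => hw i) hw1 (fun i _ => hx i)
  simpa [smul_eq_mul] using this

lemma posSemidef_smul_real {m : Type*} [Fintype m] {A : Matrix m m ℂ} (hA : A.PosSemidef)
    {c : ℝ} (hc : 0 ≤ c) : ((c : ℂ) • A).PosSemidef := by
  refine Matrix.PosSemidef.of_dotProduct_mulVec_nonneg ?_ fun x => ?_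
  · have := hA.1
    unfold Matrix.IsHermitian at *
    rw [Matrix.conjTranspose_smul, this]
    simp [Complex.conj_ofReal]
  · rw [Matrix.smul_mulVec, dotProduct_smul, smul_eq_mul]
    exact mul_nonneg (Complex.zero_le_real.mpr hc) (hA.dotProduct_mulVec_nonneg x)

lemma posSemidef_sum {m ι : Type*} [Fintype m] [Fintype ι] (A : ι → Matrix m m ℂ)
    (h : ∀ i, (A i).PosSemidef) : (∑ i, A i).PosSemidef := by
  classical
  refine Finset.sum_induction A Matrix.PosSemidef (fun a b ha hb => ha.add hb)
    Matrix.PosSemidef.zero (fun i _ => h i)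

/-- diagonal entries of a PSD matrix have nonnegative real part (they are real ≥ 0). -/
lemma posSemidef_diag_re_nonneg {m : Type*} [Fintype m] [DecidableEq m] {A : Matrix m m ℂ}
    (hA : A.PosSemidef) (k : m) : 0 ≤ (A k k).re := by
  have h := hA.re_dotProduct_nonneg (Pi.single k 1)
  simpa [dotProduct, Matrix.mulVec, Pi.single_apply, Finset.sum_ite_eq,
    Finset.sum_ite_eq'] using h

lemma posSemidef_diag_eq_re {m : Type*} [Fintype m] [DecidableEq m] {A : Matrix m m ℂ}
    (hA : A.IsHermitian) (k : m) : A k k = ((A k k).re : ℂ) := by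
  have h2 := congrFun (congrFun (congrArg (fun M : Matrix m m ℂ => M) hA) k) k
  simp only [Matrix.conjTranspose_apply] at h2
  exact (Complex.conj_eq_iff_re.mp h2).symm

lemma mul_diag_star_apply {m : Type*} [Fintype m] [DecidableEq m] (W : Matrix m m ℂ)
    (ν : m → ℝ) (k : m) :
    ((W * Matrix.diagonal (Complex.ofReal ∘ ν) * star W) k k).re
      = ∑ j, Complex.normSq (W k j) * ν j := by
  have : (W * Matrix.diagonal (Complex.ofReal ∘ ν) * star W) k k
      = ((∑ j, Complex.normSq (W k j) * ν j : ℝ) : ℂ) := by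
    rw [Matrix.mul_apply]
    push_cast
    refine Finset.sum_congr rfl fun j _ => ?_
    rw [Matrix.mul_diagonal, Matrix.star_apply]
    rw [mul_assoc, mul_comm ((Complex.ofReal ∘ ν) j), ← mul_assoc]
    rw [show W k j * star (W k j) = ((Complex.normSq (W k j) : ℝ) : ℂ) from Complex.mul_conj _]
    rfl
  rw [this, Complex.ofReal_re]

lemma entropy_le_diag {m : Type*} [Fintype m] [DecidableEq m] {τ : Matrix m m ℂ}
    (hτ : τ.PosSemidef) (U : Matrix.unitaryGroup m ℂ) :
    vNEntropy τ ≤ ∑ k, Real.negMulLog (((star (U : Matrix m m ℂ) * τ * U) k k).re) := by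
  set W : Matrix.unitaryGroup m ℂ := star U * hτ.1.eigenvectorUnitary with hWdef
  have hW : (W : Matrix m m ℂ)
      = star (U : Matrix m m ℂ) * (hτ.1.eigenvectorUnitary : Matrix m m ℂ) := rfl
  have hdiag : ∀ k, ((star (U : Matrix m m ℂ) * τ * U) k k).re
      = ∑ j, Complex.normSq ((W : Matrix m m ℂ) k j) * hτ.1.eigenvalues j := by
    intro k
    have e1 : star (U : Matrix m m ℂ) * τ * (U : Matrix m m ℂ)
        = (W : Matrix m m ℂ) * Matrix.diagonal (Complex.ofReal ∘ hτ.1.eigenvalues)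
          * star (W : Matrix m m ℂ) := by
      rw [hW]
      conv_lhs => rw [hτ.1.spectral_theorem, Unitary.conjStarAlgAut_apply]
      simp only [StarMul.star_mul, star_star, Matrix.mul_assoc]
      rfl
    rw [e1, mul_diag_star_apply]
  rw [vNEntropy_eq hτ.1]
  calc ∑ j, Real.negMulLog (hτ.1.eigenvalues j)
      = ∑ j, (∑ k, Complex.normSq ((W : Matrix m m ℂ) k j))
          * Real.negMulLog (hτ.1.eigenvalues j) := by
        refine Finset.sum_congr rfl fun j _ => ?_
        rw [unitary_col_sum, one_mul]
    _ = ∑ k, ∑ j, Complex.normSq ((W : Matrix m m ℂ) k j)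
          * Real.negMulLog (hτ.1.eigenvalues j) := by
        rw [Finset.sum_comm]
        simp [Finset.sum_mul]
    _ ≤ ∑ k, Real.negMulLog (∑ j, Complex.normSq ((W : Matrix m m ℂ) k j)
          * hτ.1.eigenvalues j) := by
        refine Finset.sum_le_sum fun k _ => ?_
        exact negMulLog_jensen _ _ (fun j => Complex.normSq_nonneg _)
          (unitary_row_sum W k) (fun j => hτ.eigenvalues_nonneg j)
    _ = ∑ k, Real.negMulLog (((star (U : Matrix m m ℂ) * τ * U) k k).re) := by
        refine Finset.sum_congr rfl fun k _ => ?_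
        rw [hdiag k]

lemma vNEntropy_concave {m : Type*} [Fintype m] [DecidableEq m] {n : ℕ}
    (p : Fin n → ℝ) (hp : ∀ i, 0 ≤ p i) (hp1 : ∑ i, p i = 1)
    (τ : Fin n → Matrix m m ℂ) (hτ : ∀ i, (τ i).PosSemidef) :
    ∑ i, p i * vNEntropy (τ i) ≤ vNEntropy (∑ i, (p i : ℂ) • τ i) := by
  set ρ : Matrix m m ℂ := ∑ i, (p i : ℂ) • τ i with hρdef
  have hρps : ρ.PosSemidef := posSemidef_sum _ fun i => posSemidef_smul_real (hτ i) (hp i)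
  set U := hρps.1.eigenvectorUnitary with hU
  have hdiag : star (U : Matrix m m ℂ) * ρ * (U : Matrix m m ℂ)
      = Matrix.diagonal (RCLike.ofReal ∘ hρps.1.eigenvalues) :=
    by have := hρps.1.conjStarAlgAut_star_eigenvectorUnitary
       rwa [Unitary.conjStarAlgAut_star_apply] at this
  -- eigenvalue k = ∑ i, p i * x i k
  have hx : ∀ k, hρps.1.eigenvalues k
      = ∑ i, p i * ((star (U : Matrix m m ℂ) * τ i * (U : Matrix m m ℂ)) k k).re := by
    intro k
    have h1 : star (U : Matrix m m ℂ) * ρ * (U : Matrix m m ℂ)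
        = ∑ i, (p i : ℂ) • (star (U : Matrix m m ℂ) * τ i * (U : Matrix m m ℂ)) := by
      rw [hρdef, Finset.mul_sum, Finset.sum_mul]
      refine Finset.sum_congr rfl fun i _ => ?_
      rw [Matrix.mul_smul, Matrix.smul_mul]
    have h2 := congrFun (congrFun (congrArg (fun M : Matrix m m ℂ => M) hdiag) k) k
    simp only [Matrix.diagonal_apply_eq, Function.comp_apply] at h2
    have h3 : ((star (U : Matrix m m ℂ) * ρ * (U : Matrix m m ℂ)) k k).re
        = ∑ i, p i * ((star (U : Matrix m m ℂ) * τ i * (U : Matrix m m ℂ)) k k).re := by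
      rw [h1]
      rw [show (∑ i, (p i : ℂ) • (star (U : Matrix m m ℂ) * τ i * (U : Matrix m m ℂ))) k k
        = ∑ i, (p i : ℂ) * (star (U : Matrix m m ℂ) * τ i * (U : Matrix m m ℂ)) k k by
          simp [Matrix.sum_apply]]
      rw [Complex.re_sum]
      refine Finset.sum_congr rfl fun i _ => ?_
      simp [Complex.mul_re]
    rw [← h3, h2]
    simp
  have hxnn : ∀ i k, 0 ≤ ((star (U : Matrix m m ℂ) * τ i * (U : Matrix m m ℂ)) k k).re := by
    intro i k
    have : (star (U : Matrix m m ℂ) * τ i * (U : Matrix m m ℂ)).PosSemidef := by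
      have := (hτ i).conjTranspose_mul_mul_same (U : Matrix m m ℂ)
      simpa [Matrix.mul_assoc, Matrix.star_eq_conjTranspose] using this
    exact posSemidef_diag_re_nonneg this k
  rw [vNEntropy_eq hρps.1]
  calc ∑ i, p i * vNEntropy (τ i)
      ≤ ∑ i, p i * ∑ k, Real.negMulLog
          (((star (U : Matrix m m ℂ) * τ i * (U : Matrix m m ℂ)) k k).re) := by
        refine Finset.sum_le_sum fun i _ => ?_
        exact mul_le_mul_of_nonneg_left (entropy_le_diag (hτ i) U) (hp i)
    _ = ∑ k, ∑ i, p i * Real.negMulLog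
          (((star (U : Matrix m m ℂ) * τ i * (U : Matrix m m ℂ)) k k).re) := by
        rw [Finset.sum_comm]
        simp [Finset.mul_sum]
    _ ≤ ∑ k, Real.negMulLog (hρps.1.eigenvalues k) := by
        refine Finset.sum_le_sum fun k _ => ?_
        rw [hx k]
        exact negMulLog_jensen _ _ hp hp1 (fun i => hxnn i k)

lemma trace_conjTranspose_mul_self_nonneg {a b : Type*} [Fintype a] [Fintype b]
    (C : Matrix a b ℂ) : 0 ≤ (Cᴴ * C).trace := by
  rw [Matrix.trace]
  refine Finset.sum_nonneg fun i _ => ?_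
  rw [Matrix.diag_apply, Matrix.mul_apply]
  refine Finset.sum_nonneg fun j _ => ?_
  rw [Matrix.conjTranspose_apply]
  exact star_mul_self_nonneg _

lemma compOut_posSemidef {dA dB ι : Type*} [Fintype dA] [Fintype dB] [Fintype ι]
    (K : ι → Matrix dB dA ℂ) {σ : Matrix dA dA ℂ} (hσ : σ.PosSemidef) :
    (compOut K σ).PosSemidef := by
  obtain ⟨B, hB⟩ : ∃ B : Matrix dA dA ℂ, σ = Bᴴ * B := by
    classical
    open scoped MatrixOrder in
    exact CStarAlgebra.nonneg_iff_eq_star_mul_self.mp hσ.nonneg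
  refine Matrix.PosSemidef.of_dotProduct_mulVec_nonneg ?_ ?_
  · ext i j
    simp only [Matrix.conjTranspose_apply, compOut, Matrix.of_apply]
    rw [show star (Matrix.trace (K j * σ * (K i)ᴴ)) = Matrix.trace ((K j * σ * (K i)ᴴ)ᴴ) from
      (Matrix.trace_conjTranspose _).symm]
    congr 1
    simp [Matrix.conjTranspose_mul, Matrix.mul_assoc, hσ.1.eq]
  · intro x
    set A : Matrix dB dA ℂ := ∑ i, star (x i) • K i with hA
    have hAH : Aᴴ = ∑ j, x j • (K j)ᴴ := by
      rw [hA, Matrix.conjTranspose_sum]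
      simp
    have key : dotProduct (star x) (compOut K σ *ᵥ x) = (A * σ * Aᴴ).trace := by
      rw [hAH, hA, Matrix.sum_mul, Matrix.sum_mul]
      simp only [Matrix.mul_sum]
      rw [Matrix.trace_sum]
      simp only [dotProduct, Matrix.mulVec, dotProduct, compOut, Matrix.of_apply,
        Pi.star_apply]
      refine Finset.sum_congr rfl fun i _ => ?_
      rw [Matrix.trace_sum, Finset.mul_sum]
      refine Finset.sum_congr rfl fun j _ => ?_
      rw [Matrix.smul_mul, Matrix.smul_mul, Matrix.mul_smul, Matrix.trace_smul, Matrix.trace_smul]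
      simp only [smul_eq_mul]
      ring
    rw [key]
    have e2 : A * σ * Aᴴ = (B * Aᴴ)ᴴ * (B * Aᴴ) := by
      rw [hB]
      simp [Matrix.conjTranspose_mul, Matrix.mul_assoc]
    rw [e2]
    exact trace_conjTranspose_mul_self_nonneg _

lemma chanOut_posSemidef {dA dB ι : Type*} [Fintype dA] [Fintype dB] [Fintype ι]
    (K : ι → Matrix dB dA ℂ) {σ : Matrix dA dA ℂ} (hσ : σ.PosSemidef) :
    (chanOut K σ).PosSemidef :=
  posSemidef_sum _ fun i => hσ.mul_mul_conjTranspose_same (K i)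

lemma chanOut_trace {dA dB ι : Type*} [Fintype dA] [DecidableEq dA] [Fintype dB] [Fintype ι]
    {K : ι → Matrix dB dA ℂ} (hK : IsKraus K) (σ : Matrix dA dA ℂ) :
    (chanOut K σ).trace = σ.trace := by
  rw [chanOut, Matrix.trace_sum]
  have : ∀ i, (K i * σ * (K i)ᴴ).trace = ((K i)ᴴ * K i * σ).trace := by
    intro i
    rw [Matrix.trace_mul_cycle]
  rw [Finset.sum_congr rfl fun i _ => this i]
  rw [← Matrix.trace_sum, ← Finset.sum_mul, hK, Matrix.one_mul]

lemma chanOut_linear {dA dB ι : Type*} [Fintype dA] [Fintype dB] [Fintype ι] {n : ℕ}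
    (K : ι → Matrix dB dA ℂ) (p : Fin n → ℝ) (σs : Fin n → Matrix dA dA ℂ) :
    chanOut K (∑ i, (p i : ℂ) • σs i) = ∑ i, (p i : ℂ) • chanOut K (σs i) := by
  simp only [chanOut, Matrix.mul_sum, Matrix.sum_mul, Matrix.mul_smul, Matrix.smul_mul]
  rw [Finset.sum_comm]
  simp [Finset.smul_sum]

lemma compOut_linear {dA dB ι : Type*} [Fintype dA] [Fintype dB] [Fintype ι] {n : ℕ}
    (K : ι → Matrix dB dA ℂ) (p : Fin n → ℝ) (σs : Fin n → Matrix dA dA ℂ) :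
    compOut K (∑ i, (p i : ℂ) • σs i) = ∑ i, (p i : ℂ) • compOut K (σs i) := by
  ext a b
  simp only [compOut, Matrix.of_apply, Matrix.sum_apply, Matrix.smul_apply,
    Matrix.mul_sum, Matrix.sum_mul, Matrix.mul_smul, Matrix.smul_mul, Matrix.trace_sum,
    Matrix.trace_smul, smul_eq_mul]

lemma trace_eq_sum_eigenvalues {m : Type*} [Fintype m] [DecidableEq m] {σ : Matrix m m ℂ}
    (h : σ.IsHermitian) : σ.trace = ((∑ k, h.eigenvalues k : ℝ) : ℂ) := by
  conv_lhs => rw [h.spectral_theorem, Unitary.conjStarAlgAut_apply]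
  rw [Matrix.trace_mul_cycle]
  rw [show star (h.eigenvectorUnitary : Matrix m m ℂ) * (h.eigenvectorUnitary : Matrix m m ℂ)
    = 1 from Matrix.mem_unitaryGroup_iff'.mp h.eigenvectorUnitary.2]
  rw [Matrix.one_mul, Matrix.trace_diagonal]
  push_cast
  rfl

lemma sum_eigenvalues_eq_one {m : Type*} [Fintype m] [DecidableEq m] {σ : Matrix m m ℂ}
    (h : σ.IsHermitian) (ht : σ.trace = 1) : ∑ k, h.eigenvalues k = 1 := by
  have := trace_eq_sum_eigenvalues h
  rw [ht] at this
  exact_mod_cast this.symm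

lemma negMulLog_le_one_sub {x : ℝ} (hx : 0 ≤ x) : Real.negMulLog x ≤ 1 - x := by
  rcases eq_or_lt_of_le hx with h | h
  · simp [← h]
  · have h1 := Real.log_le_sub_one_of_pos (inv_pos.mpr h)
    rw [Real.log_inv] at h1
    have h2 : x * x⁻¹ = 1 := mul_inv_cancel₀ h.ne'
    rw [Real.negMulLog]
    nlinarith

lemma vNEntropy_nonneg {m : Type*} [Fintype m] [DecidableEq m] {σ : Matrix m m ℂ}
    (hσ : σ.PosSemidef) (ht : σ.trace = 1) : 0 ≤ vNEntropy σ := by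
  rw [vNEntropy_eq hσ.1]
  refine Finset.sum_nonneg fun k _ => ?_
  refine Real.negMulLog_nonneg (hσ.eigenvalues_nonneg k) ?_
  have := sum_eigenvalues_eq_one hσ.1 ht
  calc hσ.1.eigenvalues k ≤ ∑ j, hσ.1.eigenvalues j :=
        Finset.single_le_sum (fun j _ => hσ.eigenvalues_nonneg j) (Finset.mem_univ k)
    _ = 1 := this

lemma vNEntropy_le_card {m : Type*} [Fintype m] [DecidableEq m] {σ : Matrix m m ℂ}
    (hσ : σ.PosSemidef) (ht : σ.trace = 1) : vNEntropy σ ≤ Fintype.card m := by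
  rw [vNEntropy_eq hσ.1]
  calc ∑ k, Real.negMulLog (hσ.1.eigenvalues k)
      ≤ ∑ k : m, (1 - hσ.1.eigenvalues k) :=
        Finset.sum_le_sum fun k _ => negMulLog_le_one_sub (hσ.eigenvalues_nonneg k)
    _ = Fintype.card m - 1 := by
        rw [Finset.sum_sub_distrib, sum_eigenvalues_eq_one hσ.1 ht]
        simp [Finset.card_univ]
    _ ≤ Fintype.card m := by linarith

lemma avg_state {dA : Type*} [Fintype dA] {n : ℕ} {p : Fin n → ℝ}
    {σs : Fin n → Matrix dA dA ℂ} (hens : IsEnsemble p σs) :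
    IsQState (∑ i, (p i : ℂ) • σs i) := by
  obtain ⟨hp, hp1, hst⟩ := hens
  constructor
  · exact posSemidef_sum _ fun i => posSemidef_smul_real (hst i).1 (hp i)
  · rw [Matrix.trace_sum]
    simp only [Matrix.trace_smul, smul_eq_mul]
    have : ∀ i, (p i : ℂ) * (σs i).trace = (p i : ℂ) := fun i => by rw [(hst i).2, mul_one]
    rw [Finset.sum_congr rfl fun i _ => this i]
    rw [← Complex.ofReal_sum, hp1, Complex.ofReal_one]

lemma holevoChan_le_card {dA dB ι : Type*} [Fintype dA] [DecidableEq dA] [Fintype dB]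
    [DecidableEq dB] [Fintype ι] [DecidableEq ι] {K : ι → Matrix dB dA ℂ} (hK : IsKraus K)
    {n : ℕ} {p : Fin n → ℝ} {σs : Fin n → Matrix dA dA ℂ} (hens : IsEnsemble p σs) :
    holevoChan K p σs ≤ Fintype.card dB := by
  obtain ⟨hp, hp1, hst⟩ := hens
  have havg := avg_state ⟨hp, hp1, hst⟩
  have h1 : vNEntropy (chanOut K (∑ i, (p i : ℂ) • σs i)) ≤ Fintype.card dB :=
    vNEntropy_le_card (chanOut_posSemidef K havg.1) (by rw [chanOut_trace hK, havg.2])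
  have h2 : 0 ≤ ∑ i, p i * vNEntropy (chanOut K (σs i)) := by
    refine Finset.sum_nonneg fun i _ => mul_nonneg (hp i) ?_
    exact vNEntropy_nonneg (chanOut_posSemidef K (hst i).1) (by rw [chanOut_trace hK, (hst i).2])
  rw [holevoChan]
  linarith

lemma holevoChan_eq_priv_add_comp {dA dB ι : Type*} [Fintype dA] [Fintype dB]
    [DecidableEq dB] [Fintype ι] [DecidableEq ι] (K : ι → Matrix dB dA ℂ)
    {n : ℕ} (p : Fin n → ℝ) (σs : Fin n → Matrix dA dA ℂ) :
    holevoChan K p σs = privInfo K p σs + holevoComp K p σs := by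
  simp only [privInfo, holevoChan, holevoComp, cohInfo, mul_sub, Finset.sum_sub_distrib]
  ring

lemma holevoComp_nonneg {dA dB ι : Type*} [Fintype dA] [Fintype dB]
    [DecidableEq dB] [Fintype ι] [DecidableEq ι] (K : ι → Matrix dB dA ℂ)
    {n : ℕ} {p : Fin n → ℝ} {σs : Fin n → Matrix dA dA ℂ} (hens : IsEnsemble p σs) :
    0 ≤ holevoComp K p σs := by
  obtain ⟨hp, hp1, hst⟩ := hens
  rw [holevoComp, compOut_linear]
  rw [sub_nonneg]
  exact vNEntropy_concave p hp hp1 _ fun i => compOut_posSemidef K (hst i).1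


/-- **Holevo gap bound.** If the ensemble `{p_i, ρ_i}` achieves the one-shot private
capacity of `N`, then `C¹(N) ≥ P¹(N) + χ({p_i,ρ_i},N^c)` and `χ({p_i,ρ_i},N^c) ≥ 0`. -/
theorem holevo_gap_bound {dA dB ι : Type*}
    [Fintype dA] [DecidableEq dA] [Fintype dB] [DecidableEq dB]
    [Fintype ι] [DecidableEq ι]
    (K : ι → Matrix dB dA ℂ) (hK : IsKraus K)
    {n : ℕ} (p : Fin n → ℝ) (σs : Fin n → Matrix dA dA ℂ)
    (hens : IsEnsemble p σs)
    (hach : privInfo K p σs = P1 K) :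
    C1 K ≥ P1 K + holevoComp K p σs ∧ 0 ≤ holevoComp K p σs := by
  have hcomp := holevoComp_nonneg K hens
  refine ⟨?_, hcomp⟩
  have hmem : holevoChan K p σs ∈ {x : ℝ | ∃ (n : ℕ) (p : Fin n → ℝ)
      (σs : Fin n → Matrix dA dA ℂ), IsEnsemble p σs ∧ holevoChan K p σs = x} :=
    ⟨n, p, σs, hens, rfl⟩
  have hbdd : BddAbove {x : ℝ | ∃ (n : ℕ) (p : Fin n → ℝ)
      (σs : Fin n → Matrix dA dA ℂ), IsEnsemble p σs ∧ holevoChan K p σs = x} := by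
    refine ⟨Fintype.card dB, fun x hx => ?_⟩
    obtain ⟨n', p', σs', hens', hx⟩ := hx
    rw [← hx]
    exact holevoChan_le_card hK hens'
  have hle : holevoChan K p σs ≤ C1 K := le_csSup hbdd hmem
  rw [holevoChan_eq_priv_add_comp, hach] at hle
  exact hle
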